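/- arXiv:2301.07730 — 2 statements merged into one kernel-verified Lean document; each statement's English description precedes it below -/
import Mathlib

section
/- There exists a constant C > 0 such that for every real κ with 0 < κ ≤ 1/2 there exist a natural number d with d ≤ C·log(1/κ)/κ² and a real polynomial P of degree at most d such that |√((x+1)/2) − P(x)| ≤ κ for every x ∈ [−1, 1]. -/
open scoped Matrix Kronecker ComplexOrder

section SqrtPolyAux

open Polynomial

/-- Coefficients of the binomial series of `√(1-t)`. -/
noncomputable def sqa : ℕ → ℝ
  | 0 => 1
  | (k+1) => sqa k * ((k : ℝ) - 1/2) / ((k : ℝ) + 1)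

lemma sqa_zero : sqa 0 = 1 := rfl

lemma sqa_rec (k : ℕ) : ((k : ℝ) + 1) * sqa (k+1) = ((k : ℝ) - 1/2) * sqa k := by
  have hk : ((k : ℝ) + 1) ≠ 0 := by positivity
  rw [show sqa (k+1) = sqa k * ((k : ℝ) - 1/2) / ((k : ℝ) + 1) from rfl]
  field_simp

lemma sqa_nonpos (k : ℕ) : sqa (k+1) ≤ 0 := by
  induction k with
  | zero => norm_num [sqa]
  | succ n ih =>
    rw [show sqa (n+2) = sqa (n+1) * (((n+1 : ℕ) : ℝ) - 1/2) / (((n+1:ℕ) : ℝ) + 1) from rfl]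
    have h1 : (0:ℝ) ≤ ((n+1 : ℕ) : ℝ) - 1/2 := by push_cast; linarith
    have h2 : (0:ℝ) < ((n+1 : ℕ) : ℝ) + 1 := by positivity
    exact div_nonpos_of_nonpos_of_nonneg (mul_nonpos_of_nonpos_of_nonneg ih h1) h2.le

/-- The truncated binomial series as a polynomial. -/
noncomputable def sqq (d : ℕ) : Polynomial ℝ :=
  ∑ k ∈ Finset.range (d+1), C (sqa k) * X ^ k

lemma sqq_succ (d : ℕ) : sqq (d+1) = sqq d + C (sqa (d+1)) * X ^ (d+1) := by
  rw [sqq, sqq, Finset.sum_range_succ]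

lemma sqq_degree (d : ℕ) : (sqq d).degree ≤ d := by
  refine (Polynomial.degree_sum_le _ _).trans ?_
  rw [Finset.sup_le_iff]
  intro k hk
  refine (Polynomial.degree_mul_le _ _).trans ?_
  have h1 : (C (sqa k)).degree ≤ 0 := Polynomial.degree_C_le
  have h2 : (X ^ k : Polynomial ℝ).degree ≤ (k : WithBot ℕ) := Polynomial.degree_X_pow_le _
  have hk' : (k : WithBot ℕ) ≤ (d : WithBot ℕ) := by
    exact_mod_cast Nat.lt_succ_iff.mp (Finset.mem_range.mp hk)
  calc (C (sqa k)).degree + (X ^ k : Polynomial ℝ).degree ≤ 0 + (k : WithBot ℕ) :=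
        add_le_add h1 h2
    _ = (k : WithBot ℕ) := zero_add _
    _ ≤ _ := hk'

lemma sqq_zero_eval : (sqq 0).eval 0 = 1 := by simp [sqq, sqa_zero]

lemma sqq_eval_zero (d : ℕ) : (sqq d).eval 0 = 1 := by
  induction d with
  | zero => simp [sqq, sqa_zero]
  | succ n ih => simp [sqq_succ, ih]

/-- The key differential identity. -/
lemma sqq_key (d : ℕ) (t : ℝ) :
    (1 - t) * (Polynomial.derivative (sqq d)).eval t + (1/2) * (sqq d).eval t
      = -(((d:ℝ) + 1) * sqa (d+1)) * t ^ d := by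
  induction d with
  | zero =>
    have h := sqa_rec 0
    rw [sqa_zero] at h
    have h0 : sqq 0 = C 1 := by simp [sqq, sqa_zero]
    rw [h0]
    simp only [Polynomial.derivative_C, Polynomial.eval_zero, Polynomial.eval_C, Nat.cast_zero,
      pow_zero, zero_add]
    simp only [Nat.cast_zero] at h
    norm_num at h ⊢
    linarith [h]
  | succ n ih =>
    have hc := sqa_rec (n+1)
    push_cast at hc
    rw [sqq_succ]
    simp only [Polynomial.derivative_add, Polynomial.derivative_C_mul, Polynomial.derivative_X_pow,
      Polynomial.eval_add, Polynomial.eval_mul, Polynomial.eval_C, Polynomial.eval_pow,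
      Polynomial.eval_X, Polynomial.eval_natCast]
    push_cast
    linear_combination ih + t^(n+1) * hc

lemma sqq_eval_one (d : ℕ) : (sqq d).eval 1 = -(2 * ((d:ℝ) + 1) * sqa (d+1)) := by
  induction d with
  | zero =>
    have h := sqa_rec 0
    rw [sqa_zero] at h
    norm_num at h
    simp [sqq, sqa_zero, h]
  | succ n ih =>
    have hc := sqa_rec (n+1)
    push_cast at hc
    rw [sqq_succ]
    simp only [Polynomial.eval_add, Polynomial.eval_mul, Polynomial.eval_C, Polynomial.eval_pow,
      Polynomial.eval_X, one_pow, mul_one]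
    push_cast
    linear_combination ih + 2 * hc

lemma sqq_deriv_nonpos (d : ℕ) {t : ℝ} (ht : 0 ≤ t) :
    (Polynomial.derivative (sqq d)).eval t ≤ 0 := by
  induction d with
  | zero =>
    have h0 : sqq 0 = C 1 := by simp [sqq, sqa_zero]
    simp [h0]
  | succ n ih =>
    rw [sqq_succ]
    simp only [Polynomial.derivative_add, Polynomial.derivative_C_mul, Polynomial.derivative_X_pow,
      Polynomial.eval_add, Polynomial.eval_mul, Polynomial.eval_C, Polynomial.eval_pow,
      Polynomial.eval_X, Polynomial.eval_natCast]
    have h1 : sqa (n+1) * (((n:ℝ)+1) * t ^ n) ≤ 0 := by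
      apply mul_nonpos_of_nonpos_of_nonneg (sqa_nonpos n)
      positivity
    push_cast
    linarith [h1]

lemma sqq_antitone (d : ℕ) : AntitoneOn (fun t => (sqq d).eval t) (Set.Icc 0 1) := by
  apply antitoneOn_of_deriv_nonpos (convex_Icc 0 1)
  · exact (Polynomial.continuous _).continuousOn
  · exact (Polynomial.differentiable _).differentiableOn
  · intro x hx
    rw [interior_Icc] at hx
    rw [Polynomial.deriv]
    exact sqq_deriv_nonpos d hx.1.le

lemma sqa_bound (k : ℕ) : -sqa (k+1) ≤ 1 / (2 * ((k:ℝ)+1) * Real.sqrt ((k:ℝ)+1)) := by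
  induction k with
  | zero =>
    have h := sqa_rec 0
    rw [sqa_zero] at h
    norm_num at h
    rw [h]
    norm_num
  | succ n ih =>
    have hrec := sqa_rec (n+1)
    push_cast at hrec ⊢
    set m : ℝ := (n : ℝ) + 1 with hm
    have hm1 : (1:ℝ) ≤ m := by
      have : (0:ℝ) ≤ (n:ℝ) := Nat.cast_nonneg n
      rw [hm]; linarith
    have hm0 : (0:ℝ) < m := by linarith
    have hs : Real.sqrt m ^ 2 = m := Real.sq_sqrt (by linarith)
    have hu : Real.sqrt (m+1) ^ 2 = m + 1 := Real.sq_sqrt (by linarith)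
    have hs0 : (0:ℝ) < Real.sqrt m := Real.sqrt_pos.mpr hm0
    have hu0 : (0:ℝ) < Real.sqrt (m+1) := Real.sqrt_pos.mpr (by linarith)
    have hsq : ((m - 1/2) * Real.sqrt (m+1))^2 ≤ (m * Real.sqrt m)^2 := by
      rw [mul_pow, mul_pow, hs, hu]
      nlinarith [hm1]
    have hkey : (m - 1/2) * Real.sqrt (m+1) ≤ m * Real.sqrt m := by
      have h1 : (0:ℝ) ≤ (m - 1/2) * Real.sqrt (m+1) :=
        mul_nonneg (by linarith) (Real.sqrt_nonneg _)
      calc (m - 1/2) * Real.sqrt (m+1) = Real.sqrt (((m - 1/2) * Real.sqrt (m+1))^2) :=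
            (Real.sqrt_sq h1).symm
        _ ≤ Real.sqrt ((m * Real.sqrt m)^2) := Real.sqrt_le_sqrt hsq
        _ = m * Real.sqrt m := Real.sqrt_sq (mul_nonneg hm0.le hs0.le)
    have ha : -sqa (n+1+1) = (-sqa (n+1)) * ((m - 1/2) / (m + 1)) := by
      have h2 : (m + 1) ≠ 0 := by linarith
      field_simp
      rw [hm] at hrec
      linear_combination (-2)*hrec
    rw [ha]
    have ihstep : (-sqa (n+1)) * ((m - 1/2)/(m+1)) ≤ (1/(2*m*Real.sqrt m)) * ((m-1/2)/(m+1)) :=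
      mul_le_mul_of_nonneg_right ih (div_nonneg (by linarith) (by linarith))
    refine ihstep.trans ?_
    have hre : (1/(2*m*Real.sqrt m)) * ((m-1/2)/(m+1)) = (m-1/2)/(2*m*Real.sqrt m*(m+1)) := by
      rw [div_mul_div_comm, one_mul]
    rw [hre, div_le_div_iff₀ (by positivity) (by positivity)]
    have hfac : (0:ℝ) ≤ 2*(m+1) := by linarith
    nlinarith [mul_le_mul_of_nonneg_left hkey hfac]

/-- numerator sign identity: for `h c x = (q x - c)^2/(1-x)`,
the derivative has sign of `(q x - c) * (M x^d - c)` where `M = q(1)`. -/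
lemma sqq_hasDeriv (d : ℕ) (c : ℝ) {x : ℝ} (hx : x ≠ 1) :
    HasDerivAt (fun y => ((sqq d).eval y - c)^2 / (1 - y))
      ((((sqq d).eval x - c) * ((sqq d).eval 1 * x ^ d - c)) / (1 - x)^2) x := by
  have h1x : (1:ℝ) - x ≠ 0 := by intro h; apply hx; linarith [h]
  have hq : HasDerivAt (fun y => ((sqq d).eval y - c)^2)
      (2 * ((sqq d).eval x - c) * ((Polynomial.derivative (sqq d)).eval x)) x := by
    have h0 : HasDerivAt (fun y => (sqq d).eval y - c)
        ((Polynomial.derivative (sqq d)).eval x) x := ((sqq d).hasDerivAt x).sub_const c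
    have this : HasDerivAt (fun y => ((sqq d).eval y - c)^2) _ x := h0.pow 2
    simpa [mul_comm, mul_assoc, mul_left_comm] using this
  have hden : HasDerivAt (fun y : ℝ => 1 - y) (-1) x := by
    simpa using (hasDerivAt_id x).const_sub (1:ℝ)
  have H := hq.div hden h1x
  refine H.congr_deriv (Eq.symm ?_)
  congr 1
  have hkey := sqq_key d x
  have hone := sqq_eval_one d
  linear_combination ((sqq d).eval x - c) * (x^d * hone - 2 * hkey)

lemma sqq_eval_one_nonneg (d : ℕ) : 0 ≤ (sqq d).eval 1 := by
  rw [sqq_eval_one]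
  have h := sqa_nonpos d
  have : (0:ℝ) < (d:ℝ) + 1 := by positivity
  nlinarith

lemma sqq_lower_ge (d : ℕ) {t : ℝ} (ht0 : 0 ≤ t) (ht1 : t ≤ 1) :
    (sqq d).eval 1 ≤ (sqq d).eval t :=
  sqq_antitone d (Set.mem_Icc.mpr ⟨ht0, ht1⟩) (Set.mem_Icc.mpr ⟨zero_le_one, le_refl 1⟩) ht1

lemma sqq_le_one (d : ℕ) {t : ℝ} (ht0 : 0 ≤ t) (ht1 : t ≤ 1) :
    (sqq d).eval t ≤ 1 := by
  have := sqq_antitone d (Set.mem_Icc.mpr ⟨le_refl 0, zero_le_one⟩)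
    (Set.mem_Icc.mpr ⟨ht0, ht1⟩) ht0
  simp only at this
  rwa [sqq_eval_zero] at this

lemma sqq_bounds (d : ℕ) {t : ℝ} (ht0 : 0 ≤ t) (ht1 : t ≤ 1) :
    Real.sqrt (1 - t) ≤ (sqq d).eval t ∧
      (sqq d).eval t ≤ (sqq d).eval 1 + Real.sqrt (1 - t) := by
  set M : ℝ := (sqq d).eval 1 with hM
  have hM0 : 0 ≤ M := sqq_eval_one_nonneg d
  have hM1 : M ≤ 1 := sqq_le_one d zero_le_one (le_refl 1)
  rcases eq_or_lt_of_le ht1 with rfl | htlt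
  · constructor
    · simpa using hM0
    · have : Real.sqrt (1 - 1) = 0 := by norm_num
      rw [this]; linarith
  -- t < 1
  · have hcont : ∀ c : ℝ, ContinuousOn (fun y => ((sqq d).eval y - c)^2 / (1 - y))
        (Set.Icc 0 t) := by
      intro c
      apply ContinuousOn.div
      · exact ((((sqq d).continuous).sub continuous_const).pow 2).continuousOn
      · exact (continuous_const.sub continuous_id).continuousOn
      · intro y hy
        have := hy.2
        intro h
        have : y = 1 := by linarith [h]
        linarith [this ▸ hy.2]
    have ht1' : (0:ℝ) < 1 - t := by linarith
    have hxne : ∀ x : ℝ, x < t → x ≠ 1 := fun x hx h => by rw [h] at hx; linarith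
    constructor
    · -- lower bound via monotonicity of (q y)^2/(1-y)
      have hmono : MonotoneOn (fun y => ((sqq d).eval y - 0)^2 / (1 - y)) (Set.Icc 0 t) := by
        apply monotoneOn_of_deriv_nonneg (convex_Icc 0 t) (hcont 0)
        · intro x hx
          rw [interior_Icc] at hx
          exact ((sqq_hasDeriv d 0 (hxne x hx.2)).differentiableAt).differentiableWithinAt
        · intro x hx
          rw [interior_Icc] at hx
          rw [(sqq_hasDeriv d 0 (hxne x hx.2)).deriv]
          apply div_nonneg _ (sq_nonneg _)
          simp only [sub_zero]
          apply mul_nonneg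
          · exact hM0.trans (sqq_lower_ge d hx.1.le (by linarith [hx.2]))
          · exact mul_nonneg hM0 (pow_nonneg hx.1.le d)
      have h01 := hmono (Set.mem_Icc.mpr ⟨le_refl 0, ht0⟩) (Set.mem_Icc.mpr ⟨ht0, le_refl t⟩) ht0
      simp only [sub_zero, sqq_eval_zero, one_pow, sub_zero] at h01
      norm_num at h01
      have hq2 : 1 - t ≤ ((sqq d).eval t)^2 := by
        rw [le_div_iff₀ ht1'] at h01
        linarith
      have hqt0 : 0 ≤ (sqq d).eval t := hM0.trans (sqq_lower_ge d ht0 ht1)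
      calc Real.sqrt (1 - t) ≤ Real.sqrt (((sqq d).eval t)^2) := Real.sqrt_le_sqrt hq2
        _ = (sqq d).eval t := Real.sqrt_sq hqt0
    · -- upper bound via antitonicity of (q y - M)^2/(1-y)
      have hanti : AntitoneOn (fun y => ((sqq d).eval y - M)^2 / (1 - y)) (Set.Icc 0 t) := by
        apply antitoneOn_of_deriv_nonpos (convex_Icc 0 t) (hcont M)
        · intro x hx
          rw [interior_Icc] at hx
          exact ((sqq_hasDeriv d M (hxne x hx.2)).differentiableAt).differentiableWithinAt
        · intro x hx
          rw [interior_Icc] at hx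
          rw [(sqq_hasDeriv d M (hxne x hx.2)).deriv]
          apply div_nonpos_of_nonpos_of_nonneg _ (sq_nonneg _)
          apply mul_nonpos_of_nonneg_of_nonpos
          · have := sqq_lower_ge d hx.1.le (by linarith [hx.2])
            linarith
          · have hxp : x ^ d ≤ 1 := pow_le_one₀ hx.1.le (by linarith [hx.2])
            nlinarith
      have h01 := hanti (Set.mem_Icc.mpr ⟨le_refl 0, ht0⟩) (Set.mem_Icc.mpr ⟨ht0, le_refl t⟩) ht0
      simp only [sqq_eval_zero] at h01
      norm_num at h01
      have hq2 : ((sqq d).eval t - M)^2 ≤ (1 - M)^2 * (1 - t) := by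
        rw [div_le_iff₀ ht1'] at h01
        linarith
      have hge : 0 ≤ (sqq d).eval t - M := by linarith [sqq_lower_ge d ht0 ht1]
      have step : (sqq d).eval t - M ≤ (1 - M) * Real.sqrt (1 - t) := by
        calc (sqq d).eval t - M = Real.sqrt (((sqq d).eval t - M)^2) := (Real.sqrt_sq hge).symm
          _ ≤ Real.sqrt ((1 - M)^2 * (1 - t)) := Real.sqrt_le_sqrt hq2
          _ = (1 - M) * Real.sqrt (1 - t) := by
              rw [Real.sqrt_mul (sq_nonneg _), Real.sqrt_sq (by linarith)]
      have hsq : (1 - M) * Real.sqrt (1 - t) ≤ Real.sqrt (1 - t) := by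
        nlinarith [Real.sqrt_nonneg (1 - t), hM0]
      linarith

lemma sqq_one_le (d : ℕ) : (sqq d).eval 1 ≤ 1 / Real.sqrt ((d:ℝ)+1) := by
  rw [sqq_eval_one]
  have hb := sqa_bound d
  have h1 : (0:ℝ) < Real.sqrt ((d:ℝ)+1) := Real.sqrt_pos.mpr (by positivity)
  have h2 : -(2*((d:ℝ)+1)*sqa (d+1)) = 2*((d:ℝ)+1) * (-sqa (d+1)) := by ring
  rw [h2]
  have h3 : 2*((d:ℝ)+1) * (-sqa (d+1)) ≤
      2*((d:ℝ)+1) * (1/(2*((d:ℝ)+1)*Real.sqrt ((d:ℝ)+1))) :=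
    mul_le_mul_of_nonneg_left hb (by positivity)
  refine h3.trans_eq ?_
  field_simp


end SqrtPolyAux


/-- The positive semidefinite square root (as defined in Mathlib of December 2024). -/
noncomputable def Matrix.PosSemidef.sqrt {n 𝕜 : Type*} [Fintype n] [DecidableEq n] [RCLike 𝕜]
    {A : Matrix n n 𝕜} (hA : A.PosSemidef) : Matrix n n 𝕜 :=
  (hA.1.eigenvectorUnitary : Matrix n n 𝕜) *
    Matrix.diagonal ((↑) ∘ (fun x : ℝ => Real.sqrt x) ∘ hA.1.eigenvalues) *
    (star (hA.1.eigenvectorUnitary : Matrix n n 𝕜))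

/-- The operator (spectral) norm of a square complex matrix. -/
noncomputable def opNorm {n : Type*} [Fintype n] [DecidableEq n] (A : Matrix n n ℂ) : ℝ :=
  ‖Matrix.toEuclideanCLM (𝕜 := ℂ) A‖

/-- The trace norm `‖A‖₁ = Tr √(Aᴴ A)` of a square complex matrix. -/
noncomputable def traceNorm {n : Type*} [Fintype n] [DecidableEq n] (A : Matrix n n ℂ) : ℝ :=
  ((Matrix.posSemidef_conjTranspose_mul_self A).sqrt.trace).re

/-- The (square-root) fidelity `F(ρ,σ) = ‖√ρ √σ‖₁` of positive semidefinite matrices. -/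
noncomputable def fidelity {n : Type*} [Fintype n] [DecidableEq n] {ρ σ : Matrix n n ℂ}
    (hρ : ρ.PosSemidef) (hσ : σ.PosSemidef) : ℝ :=
  traceNorm (hρ.sqrt * hσ.sqrt)

/-- Functional calculus for a Hermitian matrix: `f(A) = Σ_i f(λ_i) |v_i⟩⟨v_i|`. -/
noncomputable def matFun {n : Type*} [Fintype n] [DecidableEq n] {A : Matrix n n ℂ}
    (hA : A.IsHermitian) (f : ℝ → ℝ) : Matrix n n ℂ :=
  (hA.eigenvectorUnitary : Matrix n n ℂ) *
    Matrix.diagonal (fun i => (f (hA.eigenvalues i) : ℂ)) *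
    (star (hA.eigenvectorUnitary : Matrix n n ℂ))

/-- Partial trace over the first tensor factor. -/
noncomputable def ptraceA {a b : Type*} [Fintype a] (X : Matrix (a × b) (a × b) ℂ) :
    Matrix b b ℂ :=
  Matrix.of fun i j => ∑ k, X (k, i) (k, j)

/-- Partial trace over the second tensor factor. -/
noncomputable def ptraceB {a b : Type*} [Fintype b] (X : Matrix (a × b) (a × b) ℂ) :
    Matrix a a ℂ :=
  Matrix.of fun i j => ∑ k, X (i, k) (j, k)

/-- The outer product `|ψ⟩⟨φ|`. -/
def outer {a : Type*} (ψ φ : a → ℂ) : Matrix a a ℂ :=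
  Matrix.of fun i j => ψ i * (starRingEnd ℂ) (φ j)

/-- The Euclidean norm of a finitely supported complex vector. -/
noncomputable def evnorm {a : Type*} [Fintype a] (v : a → ℂ) : ℝ :=
  Real.sqrt (∑ i, ‖v i‖ ^ 2)

/-- There exists `C > 0` such that for every `0 < κ ≤ 1/2` there exist `d ≤ C·log(1/κ)/κ²`
and a real polynomial `P` of degree at most `d` with `|√((x+1)/2) − P(x)| ≤ κ` on `[−1,1]`. -/
theorem sqrt_poly_approx :
    ∃ C : ℝ, 0 < C ∧ ∀ κ : ℝ, 0 < κ → κ ≤ 1 / 2 →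
      ∃ d : ℕ, (d : ℝ) ≤ C * Real.log (1 / κ) / κ ^ 2 ∧
        ∃ P : Polynomial ℝ, P.degree ≤ (d : ℕ) ∧
          ∀ x : ℝ, -1 ≤ x → x ≤ 1 → |Real.sqrt ((x + 1) / 2) - P.eval x| ≤ κ := by
  refine ⟨3, by norm_num, fun κ hκ0 hκ12 => ?_⟩
  set d : ℕ := Nat.ceil (κ⁻¹ ^ 2) with hd
  have hκ2 : (0:ℝ) < κ⁻¹ ^ 2 := by positivity
  have hdge : κ⁻¹ ^ 2 ≤ (d : ℝ) := Nat.le_ceil _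
  have hdle : (d : ℝ) ≤ κ⁻¹ ^ 2 + 1 := (Nat.ceil_lt_add_one hκ2.le).le
  have hinv1 : (1:ℝ) ≤ κ⁻¹ ^ 2 := by
    have hprod : κ⁻¹ ^ 2 * κ ^ 2 = 1 := by field_simp
    have hsq : κ ^ 2 ≤ 1 := by nlinarith
    nlinarith [hκ2]
  have hlog : Real.log 2 ≤ Real.log (1/κ) := by
    apply Real.log_le_log (by norm_num)
    rw [le_div_iff₀ hκ0]
    linarith
  have hlog2 : (0.6931471803 : ℝ) < Real.log 2 := Real.log_two_gt_d9
  refine ⟨d, ?_, ?_⟩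
  · -- degree bound
    have h1 : (d:ℝ) ≤ 2 * κ⁻¹ ^ 2 := by linarith
    have h2 : 2 * κ⁻¹ ^ 2 ≤ 3 * Real.log (1/κ) * κ⁻¹ ^ 2 := by nlinarith
    have h3 : 3 * Real.log (1/κ) / κ ^ 2 = 3 * Real.log (1/κ) * κ⁻¹ ^ 2 := by
      rw [div_eq_mul_inv, inv_pow]
    rw [h3]
    linarith
  · refine ⟨(sqq d).comp (Polynomial.C (1/2 : ℝ) * (1 - Polynomial.X)), ?_, ?_⟩
    · -- degree
      have hq : (sqq d).natDegree ≤ d := Polynomial.natDegree_le_iff_degree_le.mpr (sqq_degree d)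
      have hr : (Polynomial.C (1/2 : ℝ) * (1 - Polynomial.X)).natDegree ≤ 1 := by
        refine Polynomial.natDegree_mul_le.trans ?_
        have h1 : (Polynomial.C (1/2 : ℝ)).natDegree = 0 := Polynomial.natDegree_C _
        have h2 : ((1 : Polynomial ℝ) - Polynomial.X).natDegree ≤ 1 := by
          refine (Polynomial.natDegree_sub_le _ _).trans ?_
          simp
        omega
      have hcomp : ((sqq d).comp (Polynomial.C (1/2 : ℝ) * (1 - Polynomial.X))).natDegree ≤ d :=
        (Polynomial.natDegree_comp_le).trans (by nlinarith [hq, hr, Nat.zero_le d])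
      exact Polynomial.degree_le_natDegree.trans (by exact_mod_cast hcomp)
    · intro x hx1 hx2
      set t : ℝ := (1 - x) / 2 with hts
      have ht0 : 0 ≤ t := by rw [hts]; linarith
      have ht1 : t ≤ 1 := by rw [hts]; linarith
      have heval : ((sqq d).comp (Polynomial.C (1/2 : ℝ) * (1 - Polynomial.X))).eval x
          = (sqq d).eval t := by
        rw [Polynomial.eval_comp]
        norm_num [hts]
        ring_nf
      have hsub : (x + 1) / 2 = 1 - t := by rw [hts]; ring
      have hb := sqq_bounds d ht0 ht1
      have hMκ : (sqq d).eval 1 ≤ κ := by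
        have h1 := sqq_one_le d
        have h2 : κ⁻¹ ≤ Real.sqrt ((d:ℝ)+1) := by
          have : κ⁻¹ ^ 2 ≤ (d:ℝ) + 1 := by linarith
          calc κ⁻¹ = Real.sqrt (κ⁻¹ ^ 2) := (Real.sqrt_sq (by positivity)).symm
            _ ≤ Real.sqrt ((d:ℝ)+1) := Real.sqrt_le_sqrt this
        have h3 : 1 / Real.sqrt ((d:ℝ)+1) ≤ κ := by
          rw [div_le_iff₀ (by positivity)]
          have hk : κ * κ⁻¹ = 1 := mul_inv_cancel₀ hκ0.ne'
          nlinarith [mul_le_mul_of_nonneg_left h2 hκ0.le, hk]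
        linarith
      rw [heval, hsub]
      rw [abs_le]
      constructor
      · have := hb.2
        linarith
      · have := hb.1
        linarith
end

section
/- Let D ≥ 1 be a natural number, C ≥ 1 a real number, δ ∈ (0, 1], and set κ = δ/(6·D·C). Let P be an odd real polynomial such that |P(x)| ≤ 2 for every x ∈ [−1,1] and |P(x) − sgn(x)| ≤ κ for every x ∈ [−1,1] with |x| ≥ κ. Then for every Hermitian D×D complex matrix A with ‖A‖∞ ≤ C: (i) ‖P(A/C)‖∞ ≤ 2, and (ii) |Tr(P(A/C)·A) − ‖A‖₁| ≤ δ. -/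
open scoped Matrix Kronecker ComplexOrder

open scoped Matrix.Norms.L2Operator

section sptdoAux
variable {n : Type*} [Fintype n] [DecidableEq n]

lemma sptdo_opNorm_eq (A : Matrix n n ℂ) : opNorm A = ‖A‖ := rfl

lemma sptdo_norm_diagonal_le {d : n → ℂ} {M : ℝ} (hM : 0 ≤ M) (h : ∀ i, ‖d i‖ ≤ M) :
    ‖Matrix.diagonal d‖ ≤ M := by
  rw [Matrix.l2_opNorm_def]
  refine ContinuousLinearMap.opNorm_le_bound _ hM fun x => ?_
  simp only [LinearEquiv.trans_apply]
  rw [LinearMap.coe_toContinuousLinearMap']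
  rw [EuclideanSpace.norm_eq, EuclideanSpace.norm_eq]
  have hx : ∀ j, (Matrix.toEuclideanLin (Matrix.diagonal d) x) j = d j * x j := by
    intro j
    simp [Matrix.toEuclideanLin_apply, Matrix.mulVec_diagonal]
  simp_rw [hx]
  rw [show M * Real.sqrt (∑ j, ‖x j‖^2) = Real.sqrt (M^2 * ∑ j, ‖x j‖^2) by
    rw [Real.sqrt_mul (sq_nonneg M), Real.sqrt_sq hM]]
  apply Real.sqrt_le_sqrt
  rw [Finset.mul_sum]
  apply Finset.sum_le_sum
  intro j _
  rw [norm_mul, mul_pow]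
  exact mul_le_mul_of_nonneg_right (pow_le_pow_left₀ (norm_nonneg _) (h j) 2) (sq_nonneg _)

lemma sptdo_norm_le_diagonal (d : n → ℂ) (i : n) : ‖d i‖ ≤ ‖Matrix.diagonal d‖ := by
  have h := (Matrix.toEuclideanCLM (𝕜 := ℂ) (Matrix.diagonal d)).le_opNorm
    (EuclideanSpace.single i 1)
  have e : Matrix.toEuclideanCLM (𝕜 := ℂ) (Matrix.diagonal d) (EuclideanSpace.single i 1)
      = EuclideanSpace.single i (d i) := by
    apply (WithLp.equiv 2 (n → ℂ)).injective
    rw [WithLp.equiv_apply, WithLp.equiv_apply]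
    rw [Matrix.ofLp_toEuclideanCLM, PiLp.ofLp_single, PiLp.ofLp_single,
      Matrix.diagonal_mulVec_single, mul_one]
  rw [e, EuclideanSpace.norm_single, EuclideanSpace.norm_single, norm_one, mul_one] at h
  exact h.trans_eq (Matrix.cstar_norm_def _).symm

lemma sptdo_norm_conj_unitary (U : Matrix.unitaryGroup n ℂ) (M : Matrix n n ℂ) :
    ‖(U : Matrix n n ℂ) * M * star (U : Matrix n n ℂ)‖ = ‖M‖ := by
  rw [← Unitary.coe_star, CStarRing.norm_mul_coe_unitary, CStarRing.norm_coe_unitary_mul]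

lemma sptdo_conj_mul_conj (U : Matrix.unitaryGroup n ℂ) (M N : Matrix n n ℂ) :
    ((U : Matrix n n ℂ) * M * star (U : Matrix n n ℂ)) *
      ((U : Matrix n n ℂ) * N * star (U : Matrix n n ℂ)) =
    (U : Matrix n n ℂ) * (M * N) * star (U : Matrix n n ℂ) := by
  have h : star (U : Matrix n n ℂ) * (U : Matrix n n ℂ) = 1 := Unitary.coe_star_mul_self U
  calc (U : Matrix n n ℂ) * M * star (U : Matrix n n ℂ) *
        ((U : Matrix n n ℂ) * N * star (U : Matrix n n ℂ))
      = (U : Matrix n n ℂ) * M * (star (U : Matrix n n ℂ) * (U : Matrix n n ℂ)) *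
        (N * star (U : Matrix n n ℂ)) := by
        simp only [mul_assoc]
    _ = (U : Matrix n n ℂ) * (M * N) * star (U : Matrix n n ℂ) := by
        rw [h, mul_one]; simp only [mul_assoc]

lemma sptdo_trace_conj (U : Matrix.unitaryGroup n ℂ) (M : Matrix n n ℂ) :
    ((U : Matrix n n ℂ) * M * star (U : Matrix n n ℂ)).trace = M.trace := by
  rw [Matrix.trace_mul_comm, ← mul_assoc, Unitary.coe_star_mul_self U, one_mul]

lemma sptdo_opNorm_matFun_le {A : Matrix n n ℂ} (hA : A.IsHermitian) (f : ℝ → ℝ)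
    {M : ℝ} (hM : 0 ≤ M) (h : ∀ i, |f (hA.eigenvalues i)| ≤ M) :
    opNorm (matFun hA f) ≤ M := by
  rw [sptdo_opNorm_eq, matFun, sptdo_norm_conj_unitary]
  refine sptdo_norm_diagonal_le hM fun i => ?_
  rw [Complex.norm_real]
  exact h i

lemma sptdo_abs_eigenvalue_le {A : Matrix n n ℂ} (hA : A.IsHermitian) (i : n) :
    |hA.eigenvalues i| ≤ opNorm A := by
  have h1 := sptdo_norm_le_diagonal (RCLike.ofReal ∘ hA.eigenvalues : n → ℂ) i
  rw [← hA.conjStarAlgAut_star_eigenvectorUnitary, Unitary.conjStarAlgAut_star_apply] at h1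
  rw [mul_assoc, ← Unitary.coe_star, CStarRing.norm_coe_unitary_mul,
    CStarRing.norm_mul_coe_unitary] at h1
  simpa [Complex.norm_real, sptdo_opNorm_eq] using h1

open scoped MatrixOrder in
lemma sptdo_traceNorm_eq {A : Matrix n n ℂ} (hA : A.IsHermitian) :
    traceNorm A = ∑ i, |hA.eigenvalues i| := by
  set U := hA.eigenvectorUnitary with hU
  set S : Matrix n n ℂ :=
    (U : Matrix n n ℂ) * Matrix.diagonal (fun i => ((|hA.eigenvalues i| : ℝ) : ℂ)) *
      star (U : Matrix n n ℂ) with hS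
  have hSpsd : S.PosSemidef := by
    have := Matrix.PosSemidef.mul_mul_conjTranspose_same
      (Matrix.posSemidef_diagonal_iff.mpr (fun i =>
        Complex.zero_le_real.mpr (abs_nonneg (hA.eigenvalues i)))) (U : Matrix n n ℂ)
    simpa [hS, Matrix.star_eq_conjTranspose] using this
  have hsq : S ^ 2 = Aᴴ * A := by
    rw [hA, pow_two, hS, sptdo_conj_mul_conj, Matrix.diagonal_mul_diagonal]
    conv_rhs => rw [hA.spectral_theorem, Unitary.conjStarAlgAut_apply]
    rw [sptdo_conj_mul_conj, Matrix.diagonal_mul_diagonal]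
    have hvv : (fun i => ((|hA.eigenvalues i| : ℝ) : ℂ) * ((|hA.eigenvalues i| : ℝ) : ℂ))
        = (fun i => (RCLike.ofReal ∘ hA.eigenvalues : n → ℂ) i *
            (RCLike.ofReal ∘ hA.eigenvalues : n → ℂ) i) := by
      funext i
      show ((|hA.eigenvalues i| : ℝ) : ℂ) * ((|hA.eigenvalues i| : ℝ) : ℂ)
          = ((hA.eigenvalues i : ℝ) : ℂ) * ((hA.eigenvalues i : ℝ) : ℂ)
      norm_cast
      rw [← sq, ← sq, sq_abs]
    rw [hvv]
  have hsqrt : S = (Matrix.posSemidef_conjTranspose_mul_self A).sqrt := by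
    have h1 : (Matrix.posSemidef_conjTranspose_mul_self A).sqrt = CFC.sqrt (Aᴴ * A) := by
      rw [CFC.sqrt_eq_real_sqrt _ (Matrix.posSemidef_conjTranspose_mul_self A).nonneg,
        cfcₙ_eq_cfc (hf0 := by simp),
        (Matrix.posSemidef_conjTranspose_mul_self A).1.cfc_eq, Matrix.IsHermitian.cfc,
        Unitary.conjStarAlgAut_apply]
      rfl
    rw [h1, eq_comm, CFC.sqrt_eq_iff _ _ (Matrix.posSemidef_conjTranspose_mul_self A).nonneg
      hSpsd.nonneg, ← sq, hsq]
  rw [traceNorm, ← hsqrt, hS, sptdo_trace_conj, Matrix.trace_diagonal]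
  rw [show (∑ i, ((|hA.eigenvalues i| : ℝ) : ℂ)) = ((∑ i, |hA.eigenvalues i| : ℝ) : ℂ) by
    push_cast; ring]
  exact Complex.ofReal_re _

lemma sptdo_trace_matFun_mul {A : Matrix n n ℂ} (hA : A.IsHermitian) (f : ℝ → ℝ) :
    ((matFun hA f * A).trace).re = ∑ i, f (hA.eigenvalues i) * hA.eigenvalues i := by
  have key : matFun hA f * A =
      (hA.eigenvectorUnitary : Matrix n n ℂ) *
        Matrix.diagonal (fun i => (f (hA.eigenvalues i) : ℂ) * (hA.eigenvalues i : ℂ)) *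
        star (hA.eigenvectorUnitary : Matrix n n ℂ) := by
    calc matFun hA f * A
        = matFun hA f * ((hA.eigenvectorUnitary : Matrix n n ℂ) *
            Matrix.diagonal (RCLike.ofReal ∘ hA.eigenvalues) *
            star (hA.eigenvectorUnitary : Matrix n n ℂ)) := by
          rw [← Unitary.conjStarAlgAut_apply (S := ℂ), ← hA.spectral_theorem]
      _ = _ := by
          rw [matFun, sptdo_conj_mul_conj, Matrix.diagonal_mul_diagonal]
          rfl
  rw [key, sptdo_trace_conj, Matrix.trace_diagonal]
  rw [show (∑ i, (f (hA.eigenvalues i) : ℂ) * (hA.eigenvalues i : ℂ))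
      = ((∑ i, f (hA.eigenvalues i) * hA.eigenvalues i : ℝ) : ℂ) by push_cast; ring]
  exact Complex.ofReal_re _

end sptdoAux

/-- An odd polynomial `P` that is bounded by `2` on `[−1,1]` and `κ`-approximates the sign
function away from `[−κ,κ]` (with `κ = δ/(6DC)`) gives a good trace-distance oracle: for every
Hermitian `A` with `‖A‖∞ ≤ C`, `‖P(A/C)‖∞ ≤ 2` and `|Tr(P(A/C)·A) − ‖A‖₁| ≤ δ`. -/
theorem sign_poly_trace_distance_oracle (D : ℕ) (hD : 1 ≤ D)
    (C : ℝ) (hC : 1 ≤ C) (δ : ℝ) (hδ0 : 0 < δ) (hδ1 : δ ≤ 1)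
    (P : Polynomial ℝ)
    (hodd : ∀ x : ℝ, P.eval (-x) = -P.eval x)
    (hbound : ∀ x : ℝ, -1 ≤ x → x ≤ 1 → |P.eval x| ≤ 2)
    (happrox : ∀ x : ℝ, -1 ≤ x → x ≤ 1 → δ / (6 * D * C) ≤ |x| →
      |P.eval x - Real.sign x| ≤ δ / (6 * D * C))
    (A : Matrix (Fin D) (Fin D) ℂ) (hA : A.IsHermitian) (hAnorm : opNorm A ≤ C) :
    opNorm (matFun hA (fun x => P.eval (x / C))) ≤ 2 ∧
      |((matFun hA (fun x => P.eval (x / C)) * A).trace).re - traceNorm A| ≤ δ := by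
  have hDpos : (0:ℝ) < D := by exact_mod_cast Nat.pos_of_ne_zero (by omega)
  have hDne : (D:ℝ) ≠ 0 := ne_of_gt hDpos
  have hCpos : (0:ℝ) < C := lt_of_lt_of_le one_pos hC
  set κ := δ / (6 * D * C) with hκ
  have hκpos : 0 < κ := by rw [hκ]; positivity
  set lam := hA.eigenvalues with hlam
  have hlam_le : ∀ i, |lam i| ≤ C := fun i => (sptdo_abs_eigenvalue_le hA i).trans hAnorm
  have hxabs : ∀ i, |lam i / C| ≤ 1 := by
    intro i
    rw [abs_div, abs_of_pos hCpos]
    exact div_le_one_of_le₀ (hlam_le i) hCpos.le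
  have hx1 : ∀ i, -1 ≤ lam i / C := fun i => (abs_le.mp (hxabs i)).1
  have hx2 : ∀ i, lam i / C ≤ 1 := fun i => (abs_le.mp (hxabs i)).2
  have hCκ : C * κ = δ / (6 * D) := by rw [hκ]; field_simp
  constructor
  · exact sptdo_opNorm_matFun_le hA _ (by norm_num) fun i => hbound _ (hx1 i) (hx2 i)
  · rw [sptdo_trace_matFun_mul hA, sptdo_traceNorm_eq hA]
    have hkey : ∀ i : Fin D, abs (P.eval (lam i / C) * lam i - |lam i|) ≤ δ / (2 * D) := by
      intro i
      set x := lam i / C with hxdef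
      have hsigneq : Real.sign (lam i) = Real.sign x := by
        rcases lt_trichotomy (lam i) 0 with h|h|h
        · rw [Real.sign_of_neg h, Real.sign_of_neg (div_neg_of_neg_of_pos h hCpos)]
        · rw [hxdef, h]; simp
        · rw [Real.sign_of_pos h, Real.sign_of_pos (div_pos h hCpos)]
      have e1 : P.eval x * lam i - |lam i| = lam i * (P.eval x - Real.sign x) := by
        rw [← hsigneq]
        rcases lt_trichotomy (lam i) 0 with h|h|h
        · rw [Real.sign_of_neg h, abs_of_neg h]; ring
        · rw [h]; simp
        · rw [Real.sign_of_pos h, abs_of_pos h]; ring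
      rw [e1, abs_mul]
      have h26 : δ / (6 * D) ≤ δ / (2 * D) := by
        apply div_le_div_of_nonneg_left hδ0.le (by positivity)
        nlinarith
      rcases le_or_gt κ |x| with hcase | hcase
      · have happ := happrox x (hx1 i) (hx2 i) hcase
        have : |lam i| * |P.eval x - Real.sign x| ≤ C * κ :=
          mul_le_mul (hlam_le i) happ (abs_nonneg _) hCpos.le
        calc |lam i| * |P.eval x - Real.sign x| ≤ C * κ := this
          _ = δ / (6 * D) := hCκ
          _ ≤ δ / (2 * D) := h26
      · have hs3 : |P.eval x - Real.sign x| ≤ 3 := by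
          have h1 : |P.eval x| ≤ 2 := hbound x (hx1 i) (hx2 i)
          have h2 : |Real.sign x| ≤ 1 := by
            rcases lt_trichotomy x 0 with h|h|h
            · rw [Real.sign_of_neg h]; norm_num
            · rw [h, Real.sign_zero]; norm_num
            · rw [Real.sign_of_pos h]; norm_num
          calc |P.eval x - Real.sign x| ≤ |P.eval x| + |Real.sign x| := abs_sub _ _
            _ ≤ 3 := by linarith
        have hlamsmall : |lam i| ≤ C * κ := by
          have : |lam i| = C * |x| := by
            rw [hxdef, abs_div, abs_of_pos hCpos]; field_simp
          rw [this]
          exact mul_le_mul_of_nonneg_left hcase.le hCpos.le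
        calc |lam i| * |P.eval x - Real.sign x| ≤ (C * κ) * 3 :=
              mul_le_mul hlamsmall hs3 (abs_nonneg _) (by positivity)
          _ = δ / (2 * D) := by rw [hCκ]; field_simp; ring
    rw [← hlam]
    calc abs ((∑ i, P.eval (lam i / C) * lam i) - ∑ i, |lam i|)
        = abs (∑ i, (P.eval (lam i / C) * lam i - |lam i|)) := by
          rw [Finset.sum_sub_distrib]
      _ ≤ ∑ i, abs (P.eval (lam i / C) * lam i - |lam i|) := Finset.abs_sum_le_sum_abs _ _
      _ ≤ ∑ _i : Fin D, δ / (2 * D) := Finset.sum_le_sum fun i _ => hkey i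
      _ = D * (δ / (2 * D)) := by
          rw [Finset.sum_const, Finset.card_univ, Fintype.card_fin, nsmul_eq_mul]
      _ ≤ δ := by
          have e : (D:ℝ) * (δ / (2 * D)) = δ / 2 := by field_simp
          rw [e]; linarith
end
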